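/- Let l be a natural number with 0 < l and let ξ be an ordinal. If a and b are finite sets of ordinals with |a| = |b| such that every element γ of a ∪ b is multiplicatively indecomposable, satisfies ξ < γ, and satisfies ω^l ≤ γ, then E_l^ξ(a,b) holds. -/

import Mathlib

/-- The increasing enumeration of a finite set of ordinals, with the ordinal `ξ`
prepended at index `0` (so index `i + 1` gives the `i`-th element of `a` in
increasing order). -/
noncomputable def finsetEnum (ξ : Ordinal) (a : Finset Ordinal) : ℕ → Ordinal
  | 0 => ξ
  | (i + 1) => (a.sort (· ≤ ·)).getD i 0

open Ordinal in
lemma key_lemma (l : ℕ) (hl : 0 < l) (ξ : Ordinal) (s : Finset Ordinal)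
    (hs : ∀ γ ∈ s, (∀ x < γ, ∀ y < γ, x * y < γ) ∧ ξ < γ ∧
      Ordinal.omega0 ^ (l : Ordinal) ≤ γ)
    (i : ℕ) (hi : i < s.card) :
    ∃ μ : Ordinal, 0 < μ ∧
      finsetEnum ξ s (i + 1) = finsetEnum ξ s i + Ordinal.omega0 ^ (l : Ordinal) * μ := by
  have hlen : (s.sort (· ≤ ·)).length = s.card := Finset.length_sort _
  have hi' : i < (s.sort (· ≤ ·)).length := by rwa [hlen]
  have hα : finsetEnum ξ s (i + 1) = (s.sort (· ≤ ·))[i] := by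
    simp [finsetEnum, List.getD, List.getElem?_eq_getElem hi']
  set α := (s.sort (· ≤ ·))[i] with hαdef
  have hmem : α ∈ s := (Finset.mem_sort _).1 (List.getElem_mem hi')
  obtain ⟨hmul, hξ, hω⟩ := hs α hmem
  have homega : (omega0 : Ordinal) ≤ α := by
    calc (omega0 : Ordinal) = omega0 ^ (1 : Ordinal) := (opow_one _).symm
    _ ≤ omega0 ^ (l : Ordinal) := by
        apply opow_le_opow_right omega0_pos
        exact_mod_cast Nat.one_le_iff_ne_zero.2 hl.ne'
    _ ≤ α := hω
  -- α is additively principal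
  have hprinc : Ordinal.Principal (· + ·) α := by
    apply principal_add_of_principal_mul (fun x y hx hy => hmul x hx y hy)
    intro h2
    have : (2 : Ordinal) < omega0 := by
      exact_mod_cast nat_lt_omega0 2
    exact absurd homega (by rw [h2]; exact not_le.2 this)
  have hadd : ∀ x < α, x + α = α := principal_add_iff_add_left_eq_self.1 hprinc
  -- α = ω ^ β
  rcases principal_add_iff_zero_or_omega0_opow.1 hprinc with h0 | ⟨β, hβ⟩
  · rw [h0] at homega
    exact absurd homega (not_le.2 omega0_pos)
  · replace hβ : α = omega0 ^ β := hβ.symm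
    have hlβ : (l : Ordinal) ≤ β := by
      rw [hβ] at hω
      exact (opow_le_opow_iff_right one_lt_omega0).1 hω
    refine ⟨omega0 ^ (β - l), opow_pos _ omega0_pos, ?_⟩
    have hfact : α = omega0 ^ (l : Ordinal) * omega0 ^ (β - l) := by
      rw [hβ, ← opow_add, Ordinal.add_sub_cancel_of_le hlβ]
    have hlt : finsetEnum ξ s i < α := by
      cases i with
      | zero => simpa [finsetEnum] using hξ
      | succ j =>
        have hj : j < (s.sort (· ≤ ·)).length := Nat.lt_of_succ_lt hi'
        have := List.SortedLT.strictMono_get (s.sortedLT_sort)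
          (show (⟨j, hj⟩ : Fin _) < ⟨j+1, hi'⟩ by simp)
        simpa [finsetEnum, List.getD, List.getElem?_eq_getElem hj, List.get_eq_getElem] using this
    rw [hα, ← hfact, hadd _ hlt]

/-- The relation `E_l^ξ` on finite sets of ordinals. -/
def ERel (l : ℕ) (ξ : Ordinal) (a b : Finset Ordinal) : Prop :=
  a.card = b.card ∧
    ∀ i < a.card, ∃ μ ν ρ : Ordinal,
      finsetEnum ξ a (i + 1) = finsetEnum ξ a i + Ordinal.omega0 ^ (l : Ordinal) * μ + ρ ∧
      finsetEnum ξ b (i + 1) = finsetEnum ξ b i + Ordinal.omega0 ^ (l : Ordinal) * ν + ρ ∧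
      ρ < Ordinal.omega0 ^ (l : Ordinal) ∧
      (min μ ν = 0 → μ = 0 ∧ ν = 0)

/-- If `0 < l`, `ξ` is an ordinal, and `a` and `b` are finite sets
of ordinals with `|a| = |b|` such that every element `γ` of `a ∪ b` is
multiplicatively indecomposable, satisfies `ξ < γ` and satisfies `ω^l ≤ γ`,
then `E_l^ξ(a,b)` holds. -/
theorem stmt2 (l : ℕ) (hl : 0 < l) (ξ : Ordinal) (a b : Finset Ordinal)
    (hcard : a.card = b.card)
    (h : ∀ γ ∈ a ∪ b, (∀ x < γ, ∀ y < γ, x * y < γ) ∧ ξ < γ ∧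
      Ordinal.omega0 ^ (l : Ordinal) ≤ γ) :
    ERel l ξ a b := by
  refine ⟨hcard, fun i hi => ?_⟩
  obtain ⟨μ, hμ, ha⟩ := key_lemma l hl ξ a
    (fun γ hγ => h γ (Finset.mem_union_left _ hγ)) i hi
  obtain ⟨ν, hν, hb⟩ := key_lemma l hl ξ b
    (fun γ hγ => h γ (Finset.mem_union_right _ hγ)) i (hcard ▸ hi)
  refine ⟨μ, ν, 0, by simpa using ha, by simpa using hb,
    Ordinal.opow_pos _ Ordinal.omega0_pos, fun hmin => ?_⟩
  rcases min_eq_iff.1 hmin with ⟨h1, _⟩ | ⟨h1, _⟩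
  · exact absurd h1 hμ.ne'
  · exact absurd h1 hν.ne'
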